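/- Assume that every element of G whose order is divisible by p is a p-element (i.e., every p-singular element of G is a p-element), and let F be a field of characteristic p. Then: (a) every family (φ_P), indexed by the p-subgroups P of G, of group homomorphisms φ_P : N_G(P) → F^× with P ≤ ker(φ_P) and with φ_{gPg^{-1}}(gxg^{-1}) = φ_P(x) for all g ∈ G and x ∈ N_G(P), automatically satisfies the coherence condition φ_P(x) = φ_{P⟨x_p⟩}(x) for all x ∈ N_G(P), and hence is a coherent G-stable tuple of linear characters with values in F; (b) for any set R of representatives of the G-conjugacy classes of p-subgroups of G, the map sending such a family to the tuple of its components at the members of R is a group isomorphism from the group of coherent G-stable tuples of linear characters with values in F onto the direct product over P ∈ R of the groups of homomorphisms N_G(P) → F^× trivial on P. -/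

import Mathlib

/-!  Common definitions: representations of finite groups over a commutative ring,
direct summands, permutation modules, vertices, Brauer-type trivial parts, characters,
p-parts of group elements, coherent tuples.  -/

open scoped TensorProduct

universe u v w

section Defs

variable {k : Type u} [CommSemiring k]

/-- `ρ` is isomorphic to a direct summand of `σ`, equivariantly. -/
def IsSummand {G : Type*} [Monoid G] {V : Type*} [AddCommMonoid V] [Module k V]
    {W : Type*} [AddCommMonoid W] [Module k W]
    (ρ : Representation k G V) (σ : Representation k G W) : Prop :=
  ∃ (i : V →ₗ[k] W) (π : W →ₗ[k] V),
    (∀ g v, i (ρ g v) = σ g (i v)) ∧ (∀ g w, π (σ g w) = ρ g (π w)) ∧ ∀ v, π (i v) = v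

/-- equivariant isomorphism of representations -/
def RepEquiv {G : Type*} [Monoid G] {V : Type*} [AddCommMonoid V] [Module k V]
    {W : Type*} [AddCommMonoid W] [Module k W]
    (ρ : Representation k G V) (σ : Representation k G W) : Prop :=
  ∃ e : V ≃ₗ[k] W, ∀ g v, e (ρ g v) = σ g (e v)

/-- the direct sum of two representations -/
def prodRep {G : Type*} [Monoid G] {V : Type*} [AddCommMonoid V] [Module k V]
    {W : Type*} [AddCommMonoid W] [Module k W]
    (ρ : Representation k G V) (σ : Representation k G W) :
    Representation k G (V × W) where
  toFun g := (ρ g).prodMap (σ g)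
  map_one' := by apply LinearMap.ext; intro v; simp
  map_mul' g h := by apply LinearMap.ext; intro v; simp

/-- the permutation representation attached to an action of `G` on `X` by permutations -/
def permRep {G : Type*} [Group G] (X : Type*) (a : G →* Equiv.Perm X) :
    Representation k G (X → k) where
  toFun g := LinearMap.funLeft k k (a g⁻¹)
  map_one' := by apply LinearMap.ext; intro f; simp [LinearMap.funLeft]
  map_mul' g h := by
    apply LinearMap.ext; intro f; funext x
    simp [LinearMap.funLeft, mul_inv_rev]

/-- a p-permutation module over `k`: a module isomorphic to a direct summand of a
permutation module `k[X]` for a finite `G`-set `X` -/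
def IsPermutationSummand {G : Type*} [Group G] {V : Type*} [AddCommMonoid V] [Module k V]
    (ρ : Representation k G V) : Prop :=
  ∃ (X : Type u) (a : G →* Equiv.Perm X), Finite X ∧ IsSummand ρ (permRep X a)

/-- an indecomposable representation: nonzero, and every equivariant idempotent
endomorphism is `0` or the identity -/
def IsIndecomposableRep {G : Type*} [Monoid G] {V : Type*} [AddCommMonoid V] [Module k V]
    (ρ : Representation k G V) : Prop :=
  (∃ v : V, v ≠ 0) ∧ ∀ f : V →ₗ[k] V,
    (∀ g v, f (ρ g v) = ρ g (f v)) → (∀ v, f (f v) = f v) →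
      (∀ v, f v = 0) ∨ (∀ v, f v = v)

/-- the carrier of the induced module `Ind_H^G (Res_H^G ρ)`:
functions `f : G → V` with `f (h * g) = ρ h (f g)` for `h ∈ H` -/
def indResCarrier {G : Type*} [Group G] {V : Type*} [AddCommMonoid V] [Module k V]
    (ρ : Representation k G V) (H : Subgroup G) : Submodule k (G → V) where
  carrier := {f | ∀ (h : H) (g : G), f (↑h * g) = ρ ↑h (f g)}
  add_mem' := by
    intro f g hf hg h x
    simp only [Pi.add_apply, hf h x, hg h x, map_add]
  zero_mem' := by intro h x; simp
  smul_mem' := by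
    intro c f hf h x
    simp only [Pi.smul_apply, hf h x, map_smul]

/-- the representation `Ind_H^G (Res_H^G ρ)`, with `G` acting by right translation -/
def indResRep {G : Type*} [Group G] {V : Type*} [AddCommMonoid V] [Module k V]
    (ρ : Representation k G V) (H : Subgroup G) :
    Representation k G (indResCarrier ρ H) where
  toFun g :=
    { toFun := fun f => ⟨fun x => (f : G → V) (x * g), fun h x => by
        simpa [mul_assoc] using f.2 h (x * g)⟩
      map_add' := fun f₁ f₂ => rfl
      map_smul' := fun c f => rfl }
  map_one' := by
    apply LinearMap.ext; intro f; apply Subtype.ext; funext x; simp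
  map_mul' g₁ g₂ := by
    apply LinearMap.ext; intro f; apply Subtype.ext; funext x
    show (f : G → V) (x * (g₁ * g₂)) = (f : G → V) (x * g₁ * g₂)
    rw [mul_assoc]

/-- `ρ` is relatively `H`-projective in the sense that it is a direct summand of
`Ind_H^G (Res_H^G ρ)` -/
def IsRelativelyProjective {G : Type*} [Group G] {V : Type*} [AddCommMonoid V] [Module k V]
    (ρ : Representation k G V) (H : Subgroup G) : Prop :=
  IsSummand ρ (indResRep ρ H)

/-- `Q` is a vertex of `ρ`: minimal among the subgroups `R` with
`ρ` a direct summand of `Ind_R^G (Res_R^G ρ)` -/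
def IsVertex {G : Type*} [Group G] {V : Type*} [AddCommMonoid V] [Module k V]
    (ρ : Representation k G V) (Q : Subgroup G) : Prop :=
  IsRelativelyProjective ρ Q ∧ ∀ R : Subgroup G, R < Q → ¬ IsRelativelyProjective ρ R

end Defs

/-- a bundled representation of `G` over `k` -/
structure RepOn (k : Type u) (G : Type v) [CommSemiring k] [Monoid G] :
    Type (max (u + 1) v) where
  carrier : Type u
  [isAddCommGroup : AddCommGroup carrier]
  [isModule : Module k carrier]
  ρ : Representation k G carrier

attribute [instance] RepOn.isAddCommGroup RepOn.isModule

section Defs2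

variable {k : Type u} [CommSemiring k]

/-- the subgroup `P` acts trivially on the representation `σ` -/
def TrivialOn {Γ : Type*} [Group Γ] {V : Type*} [AddCommMonoid V] [Module k V]
    (σ : Representation k Γ V) (P : Subgroup Γ) : Prop :=
  ∀ x ∈ P, ∀ v : V, σ x v = v

/-- `A` is a `P`-trivial part of `σ`: `σ ≅ A ⊕ B` where `P` acts trivially on `A` and
no nonzero direct summand of `B` has trivial `P`-action -/
def IsTrivialPartFor {Γ : Type v} [Group Γ] {V : Type*} [AddCommMonoid V] [Module k V]
    (σ : Representation k Γ V) (P : Subgroup Γ) (A : RepOn k Γ) : Prop :=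
  TrivialOn A.ρ P ∧
  ∃ B : RepOn k Γ, RepEquiv σ (prodRep A.ρ B.ρ) ∧
    ∀ U : RepOn k Γ, IsSummand U.ρ B.ρ → TrivialOn U.ρ P → ∀ u : U.carrier, u = 0

/-- `A` is a `P`-trivial part `M_P` of `ρ`: a direct summand of
`Res^G_{N_G(P)} ρ` with trivial `P`-action whose complement has no nonzero direct
summand with trivial `P`-action -/
def IsPTrivialPart {G : Type v} [Group G] {V : Type*} [AddCommMonoid V] [Module k V]
    (ρ : Representation k G V) (P : Subgroup G) (A : RepOn k ↥(Subgroup.normalizer (P : Set G))) : Prop :=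
  IsTrivialPartFor (ρ.comp (Subgroup.normalizer (P : Set G)).subtype) (P.subgroupOf (Subgroup.normalizer (P : Set G))) A

end Defs2

/-- the character value at `x` of the `K ⊗ₖ -` base change of the representation `σ` -/
noncomputable def charAt {k : Type u} [CommRing k] (K : Type v) [CommRing K] [Algebra k K]
    {Γ : Type*} [Monoid Γ] {V : Type*} [AddCommGroup V] [Module k V]
    (σ : Representation k Γ V) (x : Γ) : K :=
  LinearMap.trace K (TensorProduct k K V) (LinearMap.baseChange K (σ x))

/-- the `p`-part of a group element (of finite order) -/
noncomputable def pPart (p : ℕ) {G : Type*} [Group G] (x : G) : G :=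
  x ^ ((orderOf x / p ^ (orderOf x).factorization p) *
    (((orderOf x / p ^ (orderOf x).factorization p : ℕ) :
        ZMod (p ^ (orderOf x).factorization p))⁻¹).val)

/-- the `p'`-part of a natural number -/
def pPrimePart (p n : ℕ) : ℕ := n / p ^ n.factorization p

/-- the conjugate subgroup `g P g⁻¹` -/
def conjSubgroup {G : Type*} [Group G] (g : G) (P : Subgroup G) : Subgroup G :=
  Subgroup.map (MulAut.conj g).toMonoidHom P

/-- `(ρM, ρN)` is an orthogonal unit pair:
`(M ⊗ M°) ⊕ (N ⊗ N°) ≅ k ⊕ (M ⊗ N°) ⊕ (N ⊗ M°)` equivariantly, i.e.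
`[M] - [N]` is an orthogonal unit of the trivial source ring -/
def IsOrthogonalUnitPair {k : Type u} [CommRing k] {G : Type v} [Group G]
    {V : Type*} [AddCommGroup V] [Module k V] {W : Type*} [AddCommGroup W] [Module k W]
    (ρM : Representation k G V) (ρN : Representation k G W) : Prop :=
  RepEquiv (prodRep (ρM.tprod ρM.dual) (ρN.tprod ρN.dual))
    (prodRep (Representation.trivial k (G := G) (V := k)) (prodRep (ρM.tprod ρN.dual) (ρN.tprod ρM.dual)))

/-- the type of `p`-subgroups of `G` -/
def pSubgroup (p : ℕ) (G : Type*) [Group G] : Type _ := {P : Subgroup G // IsPGroup p ↥P}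

/-- a coherent `G`-stable tuple of linear characters:
`P ≤ ker φ_P`, `G`-stability, and the coherence condition
`φ_P(x) = φ_{P⟨x_p⟩}(x)` for `x ∈ N_G(P)` -/
def CoherentPred (p : ℕ) {G : Type*} [Group G] {L : Type*} [CommMonoid L]
    (φ : ∀ P : pSubgroup p G, ↥((Subgroup.normalizer (P.1 : Set G))) →* Lˣ) : Prop :=
  (∀ (P : pSubgroup p G) (x : G) (hx : x ∈ P.1),
      φ P ⟨x, Subgroup.le_normalizer hx⟩ = 1) ∧
  (∀ (P Q : pSubgroup p G) (g x : G) (hx : x ∈ (Subgroup.normalizer (P.1 : Set G))),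
      Q.1 = conjSubgroup g P.1 → ∀ (hx' : g * x * g⁻¹ ∈ (Subgroup.normalizer (Q.1 : Set G))),
      φ Q ⟨g * x * g⁻¹, hx'⟩ = φ P ⟨x, hx⟩) ∧
  (∀ (P Q : pSubgroup p G) (x : G) (hx : x ∈ (Subgroup.normalizer (P.1 : Set G))),
      Q.1 = P.1 ⊔ Subgroup.zpowers (pPart p x) → ∀ (hx' : x ∈ (Subgroup.normalizer (Q.1 : Set G))),
      φ P ⟨x, hx⟩ = φ Q ⟨x, hx'⟩)

/-- the group of coherent `G`-stable tuples of linear characters with values in `L` -/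
def coherentTuples (p : ℕ) (G : Type w) [Group G] (L : Type v) [CommMonoid L] :
    Subgroup (∀ P : pSubgroup p G, ↥((Subgroup.normalizer (P.1 : Set G))) →* Lˣ) where
  carrier := {φ | CoherentPred p φ}
  one_mem' := ⟨fun _ _ _ => rfl, fun _ _ _ _ _ _ _ => rfl, fun _ _ _ _ _ _ => rfl⟩
  mul_mem' := by
    intro a b ha hb
    refine ⟨fun P x hx => ?_, fun P Q g x hx hQ hx' => ?_, fun P Q x hx hQ hx' => ?_⟩
    · show a P _ * b P _ = 1
      rw [ha.1 P x hx, hb.1 P x hx, mul_one]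
    · show a Q _ * b Q _ = a P _ * b P _
      rw [ha.2.1 P Q g x hx hQ hx', hb.2.1 P Q g x hx hQ hx']
    · show a P _ * b P _ = a Q _ * b Q _
      rw [ha.2.2 P Q x hx hQ hx', hb.2.2 P Q x hx hQ hx']
  inv_mem' := by
    intro a ha
    refine ⟨fun P x hx => ?_, fun P Q g x hx hQ hx' => ?_, fun P Q x hx hQ hx' => ?_⟩
    · show (a P _)⁻¹ = 1
      rw [ha.1 P x hx, inv_one]
    · show (a Q _)⁻¹ = (a P _)⁻¹
      rw [ha.2.1 P Q g x hx hQ hx']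
    · show (a P _)⁻¹ = (a Q _)⁻¹
      rw [ha.2.2 P Q x hx hQ hx']

/-- the group of homomorphisms `N_G(P) → Lˣ` that are trivial on `P` -/
def trivOnHoms {G : Type w} [Group G] (P : Subgroup G) (L : Type v) [CommMonoid L] :
    Subgroup (↥(Subgroup.normalizer (P : Set G)) →* Lˣ) where
  carrier := {f | ∀ (x : G) (hx : x ∈ P), f ⟨x, Subgroup.le_normalizer hx⟩ = 1}
  one_mem' := fun _ _ => rfl
  mul_mem' := by
    intro a b ha hb x hx
    show a _ * b _ = 1
    rw [ha x hx, hb x hx, mul_one]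
  inv_mem' := by
    intro a ha x hx
    show (a _)⁻¹ = 1
    rw [ha x hx, inv_one]

section AuxLemmas

variable {G : Type*} [Group G]

lemma aux_pPart_eq_one {p : ℕ} (x : G) (h : ¬ p ∣ orderOf x) :
    pPart p x = 1 := by
  unfold pPart
  have h0 : (orderOf x).factorization p = 0 := Nat.factorization_eq_zero_of_not_dvd h
  rw [h0]
  simp only [pow_zero, Nat.div_one]
  have : (((orderOf x : ℕ) : ZMod 1)⁻¹).val = 0 := by
    rw [Subsingleton.elim (((orderOf x : ℕ) : ZMod 1)⁻¹) 0, ZMod.val_zero]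
  show x ^ (orderOf x * (((orderOf x : ℕ) : ZMod 1)⁻¹).val) = 1
  rw [this, mul_zero, pow_zero]

lemma aux_pPart_eq_self {p : ℕ} [Fact p.Prime] {x : G} {n : ℕ}
    (h : orderOf x = p ^ n) : pPart p x = x := by
  have hp : p.Prime := Fact.out
  unfold pPart
  rw [h, hp.factorization_pow, Finsupp.single_eq_same,
    Nat.div_self (pow_pos hp.pos n), Nat.cast_one, ZMod.inv_one, one_mul]
  rcases Nat.eq_or_lt_of_le (Nat.one_le_iff_ne_zero.mpr (pow_ne_zero n hp.pos.ne')) with h1 | h1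
  · have hx : x = 1 := orderOf_eq_one_iff.mp (by rw [h, ← h1])
    subst hx; simp
  · haveI : Fact (1 < p ^ n) := ⟨h1⟩
    rw [ZMod.val_one, pow_one]

lemma aux_unit_eq_one {p : ℕ} [Fact p.Prime] {F : Type*} [Field F] [CharP F p]
    (u : Fˣ) (n : ℕ) (h : u ^ p ^ n = 1) : u = 1 := by
  have hF : ((u : F)) ^ p ^ n = 1 := by
    have := congrArg (Units.val) h
    simpa using this
  have hsub : ((u : F) - 1) ^ p ^ n = 0 := by
    rw [sub_pow_char_pow, hF, one_pow, sub_self]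
  have : (u : F) - 1 = 0 :=
    pow_eq_zero_iff (pow_ne_zero n (Fact.out : p.Prime).pos.ne') |>.mp hsub
  ext
  simpa [sub_eq_zero] using this

lemma aux_mem_conjSubgroup (g : G) (S : Subgroup G) (x : G) :
    x ∈ conjSubgroup g S ↔ g⁻¹ * x * g ∈ S := by
  unfold conjSubgroup
  rw [Subgroup.mem_map_equiv, MulAut.conj_symm_apply]

lemma aux_conjSubgroup_one (S : Subgroup G) : conjSubgroup 1 S = S := by
  ext x; simp [aux_mem_conjSubgroup]

lemma aux_conjSubgroup_mul (a b : G) (S : Subgroup G) :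
    conjSubgroup (a * b) S = conjSubgroup a (conjSubgroup b S) := by
  ext x
  simp only [aux_mem_conjSubgroup, mul_inv_rev]
  rw [show b⁻¹ * a⁻¹ * x * (a * b) = b⁻¹ * (a⁻¹ * x * a) * b by group]

lemma aux_conjSubgroup_normalizer (g : G) (S : Subgroup G) :
    (Subgroup.normalizer ((conjSubgroup g S) : Set G)) = conjSubgroup g (Subgroup.normalizer (S : Set G)) :=
  (Subgroup.map_equiv_normalizer_eq S (MulAut.conj g)).symm

lemma aux_conj_mem_normalizer {g x : G} {S P : Subgroup G}
    (h : conjSubgroup g S = P) (hx : x ∈ (Subgroup.normalizer (P : Set G))) :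
    g⁻¹ * x * g ∈ (Subgroup.normalizer (S : Set G)) := by
  have h2 : (Subgroup.normalizer (P : Set G)) = conjSubgroup g (Subgroup.normalizer (S : Set G)) := by
    rw [← h, aux_conjSubgroup_normalizer]
  rw [h2, aux_mem_conjSubgroup] at hx
  exact hx

lemma aux_mem_normalizer_of_conj {n : G} {S : Subgroup G}
    (h : conjSubgroup n S = S) : n ∈ (Subgroup.normalizer (S : Set G)) := by
  rw [Subgroup.mem_normalizer_iff]
  intro x
  constructor
  · intro hx
    rw [← h, aux_mem_conjSubgroup]
    simpa [mul_assoc] using hx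
  · intro hx
    rw [← h, aux_mem_conjSubgroup] at hx
    simpa [mul_assoc] using hx

lemma aux_hom_conj {H : Type*} [Group H] {M : Type*} [CommGroup M]
    (f : H →* M) (a b : H) : f (a * b * a⁻¹) = f b := by
  rw [map_mul, map_mul, map_inv, mul_comm (f a) (f b), mul_assoc, mul_inv_cancel, mul_one]

/-- conjugation as a monoid hom between normalizers -/
def conjNormHom (g : G) (S P : Subgroup G) (h : conjSubgroup g S = P) :
    ↥(Subgroup.normalizer (P : Set G)) →* ↥(Subgroup.normalizer (S : Set G)) where
  toFun x := ⟨g⁻¹ * ↑x * g, aux_conj_mem_normalizer h x.2⟩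
  map_one' := by apply Subtype.ext; simp
  map_mul' x y := by
    apply Subtype.ext
    show g⁻¹ * (↑x * ↑y) * g = (g⁻¹ * ↑x * g) * (g⁻¹ * ↑y * g)
    group

lemma aux_mem_coherent {p : ℕ} {G : Type*} [Group G] {L : Type*} [CommMonoid L]
    {φ : ∀ P : pSubgroup p G, ↥((Subgroup.normalizer (P.1 : Set G))) →* Lˣ}
    (h : φ ∈ coherentTuples p G L) : CoherentPred p φ := h

end AuxLemmas


set_option maxHeartbeats 1000000 in
theorem statement14 (p : ℕ) [Fact p.Prime]
    (G : Type w) [Group G] [Finite G]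
    (F : Type v) [Field F] [CharP F p]
    (hsing : ∀ x : G, p ∣ orderOf x → ∃ n : ℕ, orderOf x = p ^ n) :
    (∀ (φ : ∀ P : pSubgroup p G, ↥((Subgroup.normalizer (P.1 : Set G))) →* Fˣ),
      (∀ (P : pSubgroup p G) (x : G) (hx : x ∈ P.1),
        φ P ⟨x, Subgroup.le_normalizer hx⟩ = 1) →
      (∀ (P Q : pSubgroup p G) (g x : G) (hx : x ∈ (Subgroup.normalizer (P.1 : Set G))),
        Q.1 = conjSubgroup g P.1 → ∀ (hx' : g * x * g⁻¹ ∈ (Subgroup.normalizer (Q.1 : Set G))),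
        φ Q ⟨g * x * g⁻¹, hx'⟩ = φ P ⟨x, hx⟩) →
      CoherentPred p φ) ∧
    (∀ R : Set (pSubgroup p G),
      (∀ P : pSubgroup p G, ∃! Q : pSubgroup p G,
        Q ∈ R ∧ ∃ g : G, conjSubgroup g Q.1 = P.1) →
      ∃ e : ↥(coherentTuples p G F) ≃*
          (∀ Q : R, ↥(trivOnHoms (Q : pSubgroup p G).1 F)),
        ∀ (φ : ↥(coherentTuples p G F)) (Q : R),
          ((e φ) Q).1 = φ.1 (Q : pSubgroup p G)) := by
  classical
  have partA : ∀ (φ : ∀ P : pSubgroup p G, ↥((Subgroup.normalizer (P.1 : Set G))) →* Fˣ),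
      (∀ (P : pSubgroup p G) (x : G) (hx : x ∈ P.1),
        φ P ⟨x, Subgroup.le_normalizer hx⟩ = 1) →
      (∀ (P Q : pSubgroup p G) (g x : G) (hx : x ∈ (Subgroup.normalizer (P.1 : Set G))),
        Q.1 = conjSubgroup g P.1 → ∀ (hx' : g * x * g⁻¹ ∈ (Subgroup.normalizer (Q.1 : Set G))),
        φ Q ⟨g * x * g⁻¹, hx'⟩ = φ P ⟨x, hx⟩) →
      CoherentPred p φ := by
    intro φ h1 h2
    refine ⟨h1, h2, ?_⟩
    intro P Q x hx hQ hx'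
    by_cases hdvd : p ∣ orderOf x
    · obtain ⟨n, hn⟩ := hsing x hdvd
      have key : ∀ (S : pSubgroup p G) (hxS : x ∈ (Subgroup.normalizer (S.1 : Set G))),
          φ S ⟨x, hxS⟩ = 1 := by
        intro S hxS
        apply aux_unit_eq_one (p := p) _ n
        rw [← map_pow]
        have hpow : (⟨x, hxS⟩ : ↥((Subgroup.normalizer (S.1 : Set G)))) ^ p ^ n = 1 := by
          apply Subtype.ext
          show x ^ p ^ n = 1
          rw [← hn, pow_orderOf_eq_one]
        rw [hpow, map_one]
      rw [key P hx, key Q hx']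
    · have hPQ : P = Q := by
        apply Subtype.ext
        rw [hQ, aux_pPart_eq_one x hdvd, Subgroup.zpowers_one_eq_bot, sup_bot_eq]
      subst hPQ
      rfl
  refine ⟨partA, ?_⟩
  intro R hR
  -- representative choice
  set rep : pSubgroup p G → pSubgroup p G := fun P => (hR P).choose with hrepdef
  have repMem : ∀ P, rep P ∈ R := fun P => (hR P).choose_spec.1.1
  have repConj : ∀ P, ∃ g, conjSubgroup g (rep P).1 = P.1 := fun P => (hR P).choose_spec.1.2
  have repUniq : ∀ P Q, Q ∈ R → (∃ g, conjSubgroup g Q.1 = P.1) → Q = rep P :=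
    fun P Q hQ hg => (hR P).choose_spec.2 Q ⟨hQ, hg⟩
  set gg : pSubgroup p G → G := fun P => (repConj P).choose with hggdef
  have hgg : ∀ P, conjSubgroup (gg P) (rep P).1 = P.1 := fun P => (repConj P).choose_spec
  -- the forward homomorphism
  set Φ : ↥(coherentTuples p G F) →*
      (∀ Q : R, ↥(trivOnHoms (Q : pSubgroup p G).1 F)) :=
    { toFun := fun φ => fun Q => ⟨φ.1 (Q : pSubgroup p G),
        fun x hx => (aux_mem_coherent φ.2).1 (Q : pSubgroup p G) x hx⟩
      map_one' := rfl
      map_mul' := fun a b => rfl } with hΦdef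
  have hinj : Function.Injective Φ := by
    intro a b hab
    apply Subtype.ext
    funext P
    ext x
    obtain ⟨g, hg⟩ := repConj P
    have hxmem : g⁻¹ * ↑x * g ∈ (Subgroup.normalizer ((rep P).1 : Set G)) :=
      aux_conj_mem_normalizer hg x.2
    have hx' : g * (g⁻¹ * ↑x * g) * g⁻¹ ∈ (Subgroup.normalizer (P.1 : Set G)) := by
      have hxx : g * (g⁻¹ * ↑x * g) * g⁻¹ = ↑x := by group
      rw [hxx]; exact x.2
    have hxx : (⟨g * (g⁻¹ * ↑x * g) * g⁻¹, hx'⟩ : ↥((Subgroup.normalizer (P.1 : Set G)))) = x :=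
      Subtype.ext (by group)
    have ea := (aux_mem_coherent a.2).2.1 (rep P) P g (g⁻¹ * ↑x * g) hxmem hg.symm hx'
    have eb := (aux_mem_coherent b.2).2.1 (rep P) P g (g⁻¹ * ↑x * g) hxmem hg.symm hx'
    have hRab : a.1 (rep P) = b.1 (rep P) := by
      have := congrFun hab ⟨rep P, repMem P⟩
      exact congrArg Subtype.val this
    have hval : a.1 P x = b.1 P x := by
      calc a.1 P x = a.1 P ⟨g * (g⁻¹ * ↑x * g) * g⁻¹, hx'⟩ := by rw [hxx]
        _ = a.1 (rep P) ⟨g⁻¹ * ↑x * g, hxmem⟩ := ea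
        _ = b.1 (rep P) ⟨g⁻¹ * ↑x * g, hxmem⟩ := by rw [hRab]
        _ = b.1 P ⟨g * (g⁻¹ * ↑x * g) * g⁻¹, hx'⟩ := eb.symm
        _ = b.1 P x := by rw [hxx]
    exact congrArg Units.val hval
  have hsurj : Function.Surjective Φ := by
    intro ψ
    -- the candidate tuple
    set φ₀ : ∀ P : pSubgroup p G, ↥((Subgroup.normalizer (P.1 : Set G))) →* Fˣ := fun P =>
      ((ψ ⟨rep P, repMem P⟩ : ↥(trivOnHoms (rep P).1 F)).1).comp
        (conjNormHom (gg P) (rep P).1 P.1 (hgg P)) with hφ₀def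
    have h1 : ∀ (P : pSubgroup p G) (x : G) (hx : x ∈ P.1),
        φ₀ P ⟨x, Subgroup.le_normalizer hx⟩ = 1 := by
      intro P x hx
      have hxS : (gg P)⁻¹ * x * gg P ∈ (rep P).1 := by
        rw [← aux_mem_conjSubgroup, hgg P]; exact hx
      exact (ψ ⟨rep P, repMem P⟩).2 _ hxS
    have h2 : ∀ (P Q : pSubgroup p G) (g x : G) (hx : x ∈ (Subgroup.normalizer (P.1 : Set G))),
        Q.1 = conjSubgroup g P.1 → ∀ (hx' : g * x * g⁻¹ ∈ (Subgroup.normalizer (Q.1 : Set G))),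
        φ₀ Q ⟨g * x * g⁻¹, hx'⟩ = φ₀ P ⟨x, hx⟩ := by
      intro P Q g x hx hQ hx'
      have hconj : conjSubgroup (g * gg P) (rep P).1 = Q.1 := by
        rw [aux_conjSubgroup_mul, hgg P, ← hQ]
      have hrepQ : rep P = rep Q := repUniq Q (rep P) (repMem P) ⟨g * gg P, hconj⟩
      have key2 : ∀ (S : pSubgroup p G) (hS : S ∈ R), S = rep P → ∀ (g' : G),
          conjSubgroup g' S.1 = Q.1 →
          ∀ (hmem : g'⁻¹ * (g * x * g⁻¹) * g' ∈ (Subgroup.normalizer (S.1 : Set G))),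
          (ψ ⟨S, hS⟩).1 ⟨g'⁻¹ * (g * x * g⁻¹) * g', hmem⟩ = φ₀ P ⟨x, hx⟩ := by
        rintro S hS rfl g' hg' hmem
        have hn : conjSubgroup (g'⁻¹ * (g * gg P)) (rep P).1 = (rep P).1 := by
          rw [aux_conjSubgroup_mul, hconj, ← hg', ← aux_conjSubgroup_mul,
            inv_mul_cancel, aux_conjSubgroup_one]
        have hnN : g'⁻¹ * (g * gg P) ∈ (Subgroup.normalizer ((rep P).1 : Set G)) :=
          aux_mem_normalizer_of_conj hn
        have hgm : (gg P)⁻¹ * x * gg P ∈ (Subgroup.normalizer ((rep P).1 : Set G)) :=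
          aux_conj_mem_normalizer (hgg P) hx
        show _ = (ψ ⟨rep P, repMem P⟩).1 ⟨(gg P)⁻¹ * x * gg P, hgm⟩
        have hEq : (⟨g'⁻¹ * (g * x * g⁻¹) * g', hmem⟩ : ↥((Subgroup.normalizer ((rep P).1 : Set G)))) =
            ⟨g'⁻¹ * (g * gg P), hnN⟩ * ⟨(gg P)⁻¹ * x * gg P, hgm⟩ *
              (⟨g'⁻¹ * (g * gg P), hnN⟩ : ↥((Subgroup.normalizer ((rep P).1 : Set G))))⁻¹ :=
          Subtype.ext (by show _ = (g'⁻¹ * (g * gg P)) * ((gg P)⁻¹ * x * gg P) *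
            (g'⁻¹ * (g * gg P))⁻¹; group)
        rw [hEq, aux_hom_conj]
      exact key2 (rep Q) (repMem Q) hrepQ.symm (gg Q) (hgg Q) _
    have hcoh : φ₀ ∈ coherentTuples p G F := partA φ₀ h1 h2
    refine ⟨⟨φ₀, hcoh⟩, ?_⟩
    funext Q
    apply Subtype.ext
    ext x
    obtain ⟨Q0, hQ0⟩ := Q
    have hrep0 : rep Q0 = Q0 :=
      (repUniq Q0 Q0 hQ0 ⟨1, aux_conjSubgroup_one Q0.1⟩).symm
    have key3 : ∀ (S : pSubgroup p G) (hS : S ∈ R), S = Q0 → ∀ (g' : G),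
        conjSubgroup g' S.1 = Q0.1 →
        ∀ (hmem : g'⁻¹ * ↑x * g' ∈ (Subgroup.normalizer (S.1 : Set G))),
        (ψ ⟨S, hS⟩).1 ⟨g'⁻¹ * ↑x * g', hmem⟩ = (ψ ⟨Q0, hQ0⟩).1 x := by
      intro S hS hSQ g' hg' hmem
      subst hSQ
      have hnN : g' ∈ (Subgroup.normalizer (S.1 : Set G)) := aux_mem_normalizer_of_conj hg'
      have hEq : (⟨g'⁻¹ * ↑x * g', hmem⟩ : ↥((Subgroup.normalizer (S.1 : Set G)))) =
          (⟨g', hnN⟩ : ↥((Subgroup.normalizer (S.1 : Set G))))⁻¹ * x * ⟨g', hnN⟩ :=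
        Subtype.ext rfl
      rw [hEq]
      have := aux_hom_conj (ψ ⟨S, hS⟩).1 (⟨g', hnN⟩ : ↥((Subgroup.normalizer (S.1 : Set G))))⁻¹ x
      rw [inv_inv] at this
      exact this
    have hval : φ₀ Q0 x = (ψ ⟨Q0, hQ0⟩).1 x :=
      key3 (rep Q0) (repMem Q0) hrep0 (gg Q0) (hgg Q0)
        (aux_conj_mem_normalizer (hgg Q0) x.2)
    exact congrArg Units.val hval
  refine ⟨MulEquiv.ofBijective Φ ⟨hinj, hsurj⟩, ?_⟩
  intro φ Q
  rfl
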